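/- arXiv:math/0205216 — 3 statements merged into one kernel-verified Lean document; each statement's English description precedes it below -/
import Mathlib

section
/- There is no morphism f on finite words over {1,2,3} with |f(1)| + |f(2)| + |f(3)| > 3 such that the Arshon sequence w is a fixed point of f, i.e., such that f(w) = w. -/
open List Filter

/-- Image of a letter in an odd (1-based) position under ψ. -/
def oddBlock : ℕ → List ℕ
  | 1 => [1, 2, 3]
  | 2 => [2, 3, 1]
  | 3 => [3, 1, 2]
  | _ => []

/-- Image of a letter in an even (1-based) position under ψ. -/
def evenBlock : ℕ → List ℕ
  | 1 => [3, 2, 1]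
  | 2 => [1, 3, 2]
  | 3 => [2, 1, 3]
  | _ => []

/-- The Arshon map ψ: replace the letter at each odd (1-based) position by its
`oddBlock`, and the letter at each even position by its `evenBlock`. -/
def psi (l : List ℕ) : List ℕ :=
  (l.zipIdx.map fun p => if p.2 % 2 = 0 then oddBlock p.1 else evenBlock p.1).flatten

/-- The Arshon sequence `w = lim ψ^k(1)` as an infinite word: since
`|ψ^[n+1] [1]| = 3^(n+1) > n`, the `n`-th letter (0-based) is well defined. -/
def arshon (n : ℕ) : ℕ := (psi^[n + 1] [1]).getD n 0

/-- A word over the alphabet {1,2,3}. -/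
def Word123 (l : List ℕ) : Prop := ∀ a ∈ l, a = 1 ∨ a = 2 ∨ a = 3

/-- A morphism on finite words over {1,2,3}. -/
def IsMorphism123 (f : List ℕ → List ℕ) : Prop :=
  (∀ u v, f (u ++ v) = f u ++ f v) ∧ ∀ l, Word123 l → Word123 (f l)

/-- `f(w) = w` where `w` is the infinite Arshon word: the image of every finite
prefix of `w` is again a prefix of `w`, and these images have unbounded length
(so that `f(w)` is genuinely the infinite word `w`). -/
def FixesArshon (f : List ℕ → List ℕ) : Prop :=
  (∀ n, f ((List.range n).map arshon)
      = (List.range (f ((List.range n).map arshon)).length).map arshon) ∧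
  Tendsto (fun n => (f ((List.range n).map arshon)).length) atTop atTop

/-- The infinite word `s` is obtained by iterating the morphism `f` on the
letter 1: `f(1)` begins with 1, `|f^k(1)| → ∞`, and `s = lim f^k(1)`. -/
def IterLimit (f : List ℕ → List ℕ) (s : ℕ → ℕ) : Prop :=
  (∃ t, f [1] = 1 :: t) ∧
  Tendsto (fun k => (f^[k] [1]).length) atTop atTop ∧
  ∀ k n, n < (f^[k] [1]).length → (f^[k] [1]).getD n 0 = s n

set_option maxHeartbeats 1000000

namespace ArshonAux

/-- cyclic successor on {1,2,3} -/
def cyc : ℕ → ℕ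
  | 1 => 2
  | 2 => 3
  | 3 => 1
  | _ => 0

def blk (m x : ℕ) : List ℕ := if m % 2 = 0 then oddBlock x else evenBlock x

def psiAux (k : ℕ) (l : List ℕ) : List ℕ :=
  ((l.zipIdx k).map fun p => if p.2 % 2 = 0 then oddBlock p.1 else evenBlock p.1).flatten

lemma psi_eq_psiAux (l : List ℕ) : psi l = psiAux 0 l := rfl

lemma psiAux_nil (k : ℕ) : psiAux k [] = [] := rfl

lemma psiAux_cons (k x : ℕ) (l : List ℕ) :
    psiAux k (x :: l) = blk k x ++ psiAux (k + 1) l := rfl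

lemma blk_length (k x : ℕ) (hx : x = 1 ∨ x = 2 ∨ x = 3) : (blk k x).length = 3 := by
  rcases hx with rfl | rfl | rfl <;> unfold blk <;> split <;> rfl

lemma mem_blk {k x y : ℕ} (hy : y ∈ blk k x) : y = 1 ∨ y = 2 ∨ y = 3 := by
  unfold blk at hy
  match x with
  | 0 => revert hy; split <;> simp [oddBlock, evenBlock]
  | 1 => revert hy; split <;> simp [oddBlock, evenBlock] <;> omega
  | 2 => revert hy; split <;> simp [oddBlock, evenBlock] <;> omega
  | 3 => revert hy; split <;> simp [oddBlock, evenBlock] <;> omega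
  | (n+4) => revert hy; split <;> simp [oddBlock, evenBlock]

lemma psiAux_length (l : List ℕ) (hl : Word123 l) (k : ℕ) :
    (psiAux k l).length = 3 * l.length := by
  induction l generalizing k with
  | nil => rfl
  | cons x t ih =>
    rw [psiAux_cons]
    have hx := hl x (by simp)
    have ht : Word123 t := fun a ha => hl a (by simp [ha])
    rw [List.length_append, blk_length k x hx, ih ht (k+1), List.length_cons]
    omega

lemma psiAux_append (u v : List ℕ) (k : ℕ) :
    psiAux k (u ++ v) = psiAux k u ++ psiAux (k + u.length) v := by
  induction u generalizing k with
  | nil => simp [psiAux_nil]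
  | cons x t ih =>
    simp only [List.cons_append, psiAux_cons, ih (k+1), List.length_cons]
    have h : k + 1 + t.length = k + (t.length + 1) := by omega
    rw [h, List.append_assoc]

lemma psiAux_getD (l : List ℕ) (hl : Word123 l) :
    ∀ k m r, m < l.length → r < 3 →
      (psiAux k l).getD (3 * m + r) 0 = (blk (k + m) (l.getD m 0)).getD r 0 := by
  induction l with
  | nil => intro k m r hm; simp at hm
  | cons x t ih =>
    intro k m r hm hr
    have hx := hl x (by simp)
    have ht : Word123 t := fun a ha => hl a (by simp [ha])
    rw [psiAux_cons]
    match m with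
    | 0 =>
      rw [List.getD_append _ _ _ _ (by rw [blk_length k x hx]; omega)]
      simp
    | (m+1) =>
      rw [List.getD_append_right _ _ _ _ (by rw [blk_length k x hx]; omega)]
      rw [blk_length k x hx]
      have : 3 * (m + 1) + r - 3 = 3 * m + r := by omega
      rw [this]
      have := ih ht (k+1) m r (by simpa using hm) hr
      rw [this]
      congr 2
      omega

lemma word_psiAux (l : List ℕ) (k : ℕ) : Word123 (psiAux k l) := by
  intro y hy
  simp only [psiAux, List.mem_flatten, List.mem_map] at hy
  obtain ⟨bl, ⟨p, _, rfl⟩, hy⟩ := hy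
  have : y ∈ blk p.2 p.1 := by unfold blk; exact hy
  exact mem_blk this

lemma word_psi (l : List ℕ) : Word123 (psi l) := word_psiAux l 0

lemma word_iter (k : ℕ) : Word123 (psi^[k] [1]) := by
  cases k with
  | zero => intro a ha; simp at ha; simp [ha]
  | succ n => rw [Function.iterate_succ_apply']; exact word_psi _

lemma length_iter (k : ℕ) : (psi^[k] [1]).length = 3 ^ k := by
  induction k with
  | zero => rfl
  | succ n ih =>
    rw [Function.iterate_succ_apply', psi_eq_psiAux,
      psiAux_length _ (word_iter n), ih, pow_succ]
    ring

lemma psi_prefix {u v : List ℕ} (h : u <+: v) : psi u <+: psi v := by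
  obtain ⟨w, rfl⟩ := h
  rw [psi_eq_psiAux, psi_eq_psiAux, psiAux_append]
  exact List.prefix_append _ _

lemma iter_prefix_succ (k : ℕ) : psi^[k] [1] <+: psi^[k+1] [1] := by
  induction k with
  | zero => exact ⟨[2,3], rfl⟩
  | succ n ih =>
    rw [Function.iterate_succ_apply' psi n, Function.iterate_succ_apply' psi (n+1)]
    exact psi_prefix ih

lemma iter_prefix_le {k k' : ℕ} (h : k ≤ k') : psi^[k] [1] <+: psi^[k'] [1] := by
  induction h with
  | refl => exact List.prefix_refl _
  | step h ih => exact ih.trans (iter_prefix_succ _)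

lemma getD_prefix {u v : List ℕ} (h : u <+: v) {n : ℕ} (hn : n < u.length) :
    u.getD n 0 = v.getD n 0 := by
  obtain ⟨w, rfl⟩ := h
  rw [List.getD_append _ _ _ _ hn]

lemma arshon_eq (n k : ℕ) (h : n < 3 ^ k) : arshon n = (psi^[k] [1]).getD n 0 := by
  have hn1 : n < 3 ^ (n + 1) :=
    lt_trans (Nat.lt_pow_self (n := n) (by norm_num : 1 < 3)) (Nat.pow_lt_pow_succ (by norm_num))
  rcases le_total (n+1) k with hk | hk
  · exact getD_prefix (iter_prefix_le hk) (by rw [length_iter]; exact hn1)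
  · exact (getD_prefix (iter_prefix_le hk) (by rw [length_iter]; exact h)).symm

lemma arshon_mem (n : ℕ) : arshon n = 1 ∨ arshon n = 2 ∨ arshon n = 3 := by
  have hn1 : n < (psi^[n+1] [1]).length := by
    rw [length_iter]
    exact lt_trans (Nat.lt_pow_self (n := n) (by norm_num : 1 < 3)) (Nat.pow_lt_pow_succ (by norm_num))
  have : arshon n = (psi^[n+1] [1]).getD n 0 := rfl
  rw [this, List.getD_eq_getElem _ _ hn1]
  exact word_iter (n+1) _ (List.getElem_mem hn1)

lemma arshon_triple (m r : ℕ) (hr : r < 3) :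
    arshon (3 * m + r) = (blk m (arshon m)).getD r 0 := by
  have hmlt : m < 3 ^ (m + 1) :=
    lt_trans (Nat.lt_pow_self (n := m) (by norm_num : 1 < 3)) (Nat.pow_lt_pow_succ (by norm_num))
  have h1 : 3 * m + r < 3 ^ (m + 2) := by
    have : m + 1 ≤ 3 ^ (m+1) := hmlt
    calc 3 * m + r < 3 * (m + 1) := by omega
    _ ≤ 3 * 3 ^ (m+1) := by omega
    _ = 3 ^ (m+2) := by ring
  rw [arshon_eq (3*m+r) (m+2) h1, Function.iterate_succ_apply', psi_eq_psiAux,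
    psiAux_getD _ (word_iter (m+1)) 0 m r (by rw [length_iter]; exact hmlt) hr,
    Nat.zero_add, ← arshon_eq m (m+1) hmlt]


lemma W1 (m : ℕ) : arshon (3 * m + 1) = cyc (arshon m) := by
  rw [arshon_triple m 1 (by norm_num)]
  rcases arshon_mem m with h | h | h <;> rw [h] <;> simp only [blk] <;> split <;> rfl

lemma W0e (m : ℕ) (h : m % 2 = 0) : arshon (3 * m) = arshon m := by
  rw [show 3 * m = 3 * m + 0 from rfl, arshon_triple m 0 (by norm_num)]
  simp only [blk, if_pos h]
  rcases arshon_mem m with hx | hx | hx <;> rw [hx] <;> rfl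

lemma W0o (m : ℕ) (h : m % 2 = 1) : arshon (3 * m) = cyc (cyc (arshon m)) := by
  rw [show 3 * m = 3 * m + 0 from rfl, arshon_triple m 0 (by norm_num)]
  simp only [blk, if_neg (by omega : ¬ m % 2 = 0)]
  rcases arshon_mem m with hx | hx | hx <;> rw [hx] <;> rfl

lemma W2e (m : ℕ) (h : m % 2 = 0) : arshon (3 * m + 2) = cyc (cyc (arshon m)) := by
  rw [arshon_triple m 2 (by norm_num)]
  simp only [blk, if_pos h]
  rcases arshon_mem m with hx | hx | hx <;> rw [hx] <;> rfl

lemma W2o (m : ℕ) (h : m % 2 = 1) : arshon (3 * m + 2) = arshon m := by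
  rw [arshon_triple m 2 (by norm_num)]
  simp only [blk, if_neg (by omega : ¬ m % 2 = 0)]
  rcases arshon_mem m with hx | hx | hx <;> rw [hx] <;> rfl

def L15 : List ℕ := [1, 2, 3, 1, 3, 2, 3, 1, 2, 3, 2, 1, 3, 1, 2]

lemma arshon_small : ∀ n < 15, arshon n = L15.getD n 0 := by
  intro n hn
  rw [arshon_eq n 3 (by omega)]
  have h27 : psi^[3] [1] =
      [1, 2, 3, 1, 3, 2, 3, 1, 2, 3, 2, 1, 3, 1, 2, 1, 3, 2, 3, 1, 2, 3, 2, 1, 2, 3, 1] := by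
    rfl
  rw [h27]
  interval_cases n <;> rfl

/-- cyc-squared has no fixed point on the alphabet -/
lemma cyc_cyc_ne {x : ℕ} (hx : x = 1 ∨ x = 2 ∨ x = 3) : cyc (cyc x) ≠ x := by
  rcases hx with rfl | rfl | rfl <;> decide

lemma descend : ∀ s : ℕ, 0 < s →
    (∀ i, i < s → arshon (2 * s + i) = arshon (4 * s + i)) → ∃ t, s = 3 ^ t := by
  intro s
  induction s using Nat.strong_induction_on with
  | _ s ih =>
    intro hs hA
    rcases eq_or_lt_of_le (Nat.succ_le_of_lt hs) with h1 | hs1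
    · exact ⟨0, by omega⟩
    by_cases h2 : s = 2
    · exfalso
      have h := hA 0 (by omega)
      rw [h2] at h
      simp only [show 2 * 2 + 0 = 4 from rfl, show 4 * 2 + 0 = 8 from rfl] at h
      rw [arshon_small 4 (by norm_num), arshon_small 8 (by norm_num)] at h
      simp [L15] at h
    -- now s ≥ 3
    have hs3 : 3 ≤ s := by omega
    rcases (by omega : s % 3 = 0 ∨ s % 3 = 1 ∨ s % 3 = 2) with h0 | h0 | h0
    · -- s = 3 q
      obtain ⟨q, rfl⟩ : ∃ q, s = 3 * q := ⟨s / 3, by omega⟩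
      have hq : 0 < q := by omega
      have hAq : ∀ i, i < q → arshon (2 * q + i) = arshon (4 * q + i) := by
        intro i hi
        have h := hA (3 * i) (by omega)
        rw [show 2 * (3 * q) + 3 * i = 3 * (2 * q + i) from by ring,
            show 4 * (3 * q) + 3 * i = 3 * (4 * q + i) from by ring] at h
        rcases Nat.even_or_odd (2 * q + i) with he | ho
        · have he' : (2 * q + i) % 2 = 0 := Nat.even_iff.mp he
          have he2 : (4 * q + i) % 2 = 0 := by omega
          rwa [W0e _ he', W0e _ he2] at h
        · have ho' : (2 * q + i) % 2 = 1 := Nat.odd_iff.mp ho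
          have ho2 : (4 * q + i) % 2 = 1 := by omega
          rw [W0o _ ho', W0o _ ho2] at h
          rcases arshon_mem (2 * q + i) with hx | hx | hx <;>
            rcases arshon_mem (4 * q + i) with hy | hy | hy <;>
              rw [hx, hy] at h ⊢ <;> simp [cyc] at h ⊢ <;> omega
      obtain ⟨t, ht⟩ := ih q (by omega) hq hAq
      exact ⟨t + 1, by rw [pow_succ]; omega⟩
    · -- s = 3 q + 1, s ≥ 4
      obtain ⟨q, rfl⟩ : ∃ q, s = 3 * q + 1 := ⟨s / 3, by omega⟩
      have hq : 1 ≤ q := by omega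
      exfalso
      have e1 := hA 2 (by omega)
      have e2 := hA 3 (by omega)
      rw [show 2 * (3 * q + 1) + 2 = 3 * (2 * q + 1) + 1 from by ring] at e1
      rw [show 4 * (3 * q + 1) + 2 = 3 * (4 * q + 2) from by ring] at e1
      rw [show 2 * (3 * q + 1) + 3 = 3 * (2 * q + 1) + 2 from by ring] at e2
      rw [show 4 * (3 * q + 1) + 3 = 3 * (4 * q + 2) + 1 from by ring] at e2
      rw [W1, W0e _ (by omega)] at e1
      rw [W2o _ (by omega), W1] at e2
      -- e1 : cyc x = X, e2 : x = cyc X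
      rcases arshon_mem (2 * q + 1) with hx | hx | hx <;>
        rcases arshon_mem (4 * q + 2) with hy | hy | hy <;>
          rw [hx, hy] at e1 e2 <;> simp [cyc] at e1 e2 <;> omega
    · -- s = 3 q + 2, s ≥ 5
      obtain ⟨q, rfl⟩ : ∃ q, s = 3 * q + 2 := ⟨s / 3, by omega⟩
      have hq : 1 ≤ q := by omega
      exfalso
      have e1 := hA 2 (by omega)
      have e2 := hA 3 (by omega)
      rw [show 2 * (3 * q + 2) + 2 = 3 * (2 * q + 2) from by ring] at e1
      rw [show 4 * (3 * q + 2) + 2 = 3 * (4 * q + 3) + 1 from by ring] at e1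
      rw [show 2 * (3 * q + 2) + 3 = 3 * (2 * q + 2) + 1 from by ring] at e2
      rw [show 4 * (3 * q + 2) + 3 = 3 * (4 * q + 3) + 2 from by ring] at e2
      rw [W0e _ (by omega), W1] at e1
      rw [W1, W2o _ (by omega)] at e2
      rcases arshon_mem (2 * q + 2) with hx | hx | hx <;>
        rcases arshon_mem (4 * q + 3) with hy | hy | hy <;>
          rw [hx, hy] at e1 e2 <;> simp [cyc] at e1 e2 <;> omega

lemma ext_at {A : ℕ} {W : List ℕ} (X Y Z : List ℕ) (hw : W = (List.range A).map arshon)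
    (hsplit : W = X ++ (Y ++ Z)) :
    ∀ p j, p = X.length → j < Y.length → Y.getD j 0 = arshon (p + j) := by
  intro p j hp hj
  have h : (List.range A).map arshon = X ++ (Y ++ Z) := by rw [← hw, hsplit]
  subst hp
  have hA : A = X.length + (Y.length + Z.length) := by
    have := congrArg List.length h
    simpa using this
  have h1 : (X ++ (Y ++ Z)).getD (X.length + j) 0 = Y.getD j 0 := by
    rw [List.getD_append_right _ _ _ _ (by omega), Nat.add_sub_cancel_left,
      List.getD_append _ _ _ _ hj]
  rw [← h1, ← h, List.getD_eq_getElem _ _ (by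
    simp only [List.length_map, List.length_range]; omega)]
  simp

lemma arshon_val0 : arshon 0 = 1 := by rw [arshon_small 0 (by norm_num)]; rfl
lemma arshon_val1 : arshon 1 = 2 := by rw [arshon_small 1 (by norm_num)]; rfl

lemma pre3 : (List.range 3).map arshon = [1, 2, 3] := by
  rw [List.map_congr_left (g := fun n => L15.getD n 0)
    (fun n hn => arshon_small n (by simp [List.mem_range] at hn; omega))]
  decide

lemma pre6 : (List.range 6).map arshon = [1, 2, 3, 1, 3, 2] := by
  rw [List.map_congr_left (g := fun n => L15.getD n 0)
    (fun n hn => arshon_small n (by simp [List.mem_range] at hn; omega))]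
  decide

lemma pre9 : (List.range 9).map arshon = [1, 2, 3, 1, 3, 2, 3, 1, 2] := by
  rw [List.map_congr_left (g := fun n => L15.getD n 0)
    (fun n hn => arshon_small n (by simp [List.mem_range] at hn; omega))]
  decide

lemma pre12 : (List.range 12).map arshon = [1, 2, 3, 1, 3, 2, 3, 1, 2, 3, 2, 1] := by
  rw [List.map_congr_left (g := fun n => L15.getD n 0)
    (fun n hn => arshon_small n (by simp [List.mem_range] at hn; omega))]
  decide

lemma pre15 : (List.range 15).map arshon = [1, 2, 3, 1, 3, 2, 3, 1, 2, 3, 2, 1, 3, 1, 2] := by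
  rw [List.map_congr_left (g := fun n => L15.getD n 0)
    (fun n hn => arshon_small n (by simp [List.mem_range] at hn; omega))]
  decide

end ArshonAux

open ArshonAux

/-- There is no morphism `f` on finite words over {1,2,3} with
`|f(1)| + |f(2)| + |f(3)| > 3` such that the Arshon sequence is a fixed point
of `f`, i.e. `f(w) = w`. -/
theorem arshon_no_fixing_morphism :
    ¬ ∃ f : List ℕ → List ℕ, IsMorphism123 f ∧
      (f [1]).length + (f [2]).length + (f [3]).length > 3 ∧
      FixesArshon f := by
  rintro ⟨f, ⟨fadd, -⟩, hS, hfix, -⟩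
  have ftriple : ∀ x y z : ℕ, f [x, y, z] = f [x] ++ (f [y] ++ f [z]) := by
    intro x y z
    rw [show [x, y, z] = [x] ++ ([y] ++ [z]) from rfl, fadd, fadd]
  -- image equations
  have h3 := hfix 3
  rw [pre3, ftriple] at h3
  have h6 := hfix 6
  rw [pre6, show ([1,2,3,1,3,2] : List ℕ) = [1,2,3] ++ [1,3,2] from rfl, fadd,
    ftriple, ftriple] at h6
  have h9 := hfix 9
  rw [pre9, show ([1,2,3,1,3,2,3,1,2] : List ℕ) = ([1,2,3] ++ [1,3,2]) ++ [3,1,2] from rfl,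
    fadd, fadd, ftriple, ftriple, ftriple] at h9
  have h12 := hfix 12
  rw [pre12, show ([1,2,3,1,3,2,3,1,2,3,2,1] : List ℕ)
      = (([1,2,3] ++ [1,3,2]) ++ [3,1,2]) ++ [3,2,1] from rfl,
    fadd, fadd, fadd, ftriple, ftriple, ftriple, ftriple] at h12
  have h15 := hfix 15
  rw [pre15, show ([1,2,3,1,3,2,3,1,2,3,2,1,3,1,2] : List ℕ)
      = ((([1,2,3] ++ [1,3,2]) ++ [3,1,2]) ++ [3,2,1]) ++ [3,1,2] from rfl,
    fadd, fadd, fadd, fadd, ftriple, ftriple, ftriple, ftriple] at h15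
  -- the key repetition: arshon(2S+i) = arshon(4S+i) for i < S
  have hA : ∀ i, i < (f [1]).length + (f [2]).length + (f [3]).length →
      arshon (2 * ((f [1]).length + (f [2]).length + (f [3]).length) + i)
        = arshon (4 * ((f [1]).length + (f [2]).length + (f [3]).length) + i) := by
    intro i hi
    have u6 := ext_at ((f [1] ++ (f [2] ++ f [3])) ++ (f [1] ++ (f [3] ++ f [2])))
      (f [3] ++ (f [1] ++ f [2])) [] h9 (by simp [List.append_assoc])
      (2 * ((f [1]).length + (f [2]).length + (f [3]).length)) i
      (by simp only [List.length_append]; omega)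
      (by simp only [List.length_append]; omega)
    have u7 := ext_at ((((f [1] ++ (f [2] ++ f [3])) ++ (f [1] ++ (f [3] ++ f [2])))
        ++ (f [3] ++ (f [1] ++ f [2]))) ++ (f [3] ++ (f [2] ++ f [1])))
      (f [3] ++ (f [1] ++ f [2])) [] h15 (by simp [List.append_assoc])
      (4 * ((f [1]).length + (f [2]).length + (f [3]).length)) i
      (by simp only [List.length_append]; omega)
      (by simp only [List.length_append]; omega)
    exact u6.symm.trans u7
  obtain ⟨t, ht⟩ := descend _ (by omega) hA
  have ht2 : 2 ≤ t := by
    by_contra hcon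
    interval_cases t <;> simp at ht <;> omega
  set e : ℕ := 3 ^ (t - 1) with hedef
  have hepos : 0 < e := Nat.pow_pos (by norm_num)
  have heodd : e % 2 = 1 := by rw [hedef, Nat.pow_mod]; norm_num
  have hS3 : (f [1]).length + (f [2]).length + (f [3]).length = 3 * e := by
    rw [ht, hedef]
    conv_lhs => rw [show t = (t - 1) + 1 from by omega]
    rw [pow_succ]
    ring
  -- a ≤ 1
  have hba : (f [1]).length ≤ 1 := by
    by_contra hcon
    have g00 := ext_at [] (f [1]) (f [2] ++ f [3]) h3 (by simp) 0 0 (by simp) (by omega)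
    have g01 := ext_at [] (f [1]) (f [2] ++ f [3]) h3 (by simp) 0 1 (by simp) (by omega)
    have g10 := ext_at (f [1] ++ (f [2] ++ f [3])) (f [1]) (f [3] ++ f [2]) h6 rfl
      (3 * e) 0 (by simp only [List.length_append]; omega) (by omega)
    have g11 := ext_at (f [1] ++ (f [2] ++ f [3])) (f [1]) (f [3] ++ f [2]) h6 rfl
      (3 * e) 1 (by simp only [List.length_append]; omega) (by omega)
    have e0 : arshon 0 = arshon (3 * e) := by
      rw [show (0:ℕ) + 0 = 0 from rfl] at g00
      rw [show 3 * e + 0 = 3 * e from rfl] at g10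
      exact g00.symm.trans g10
    have e1 : arshon 1 = arshon (3 * e + 1) := by
      rw [show (0:ℕ) + 1 = 1 from rfl] at g01
      exact g01.symm.trans g11
    rw [arshon_val0, W0o e heodd] at e0
    rw [arshon_val1, W1 e] at e1
    rcases arshon_mem e with hx | hx | hx <;> rw [hx] at e0 e1 <;> simp [cyc] at e0 e1
  -- c ≤ 1
  have hbc : (f [3]).length ≤ 1 := by
    by_contra hcon
    have g00 := ext_at ((f [1] ++ (f [2] ++ f [3])) ++ (f [1] ++ (f [3] ++ f [2])))
      (f [3]) (f [1] ++ f [2]) h9 (by simp [List.append_assoc])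
      (3 * (2 * e)) 0 (by simp only [List.length_append]; omega) (by omega)
    have g01 := ext_at ((f [1] ++ (f [2] ++ f [3])) ++ (f [1] ++ (f [3] ++ f [2])))
      (f [3]) (f [1] ++ f [2]) h9 (by simp [List.append_assoc])
      (3 * (2 * e)) 1 (by simp only [List.length_append]; omega) (by omega)
    have g10 := ext_at (((f [1] ++ (f [2] ++ f [3])) ++ (f [1] ++ (f [3] ++ f [2])))
        ++ (f [3] ++ (f [1] ++ f [2])))
      (f [3]) (f [2] ++ f [1]) h12 (by simp [List.append_assoc])
      (3 * (3 * e)) 0 (by simp only [List.length_append]; omega) (by omega)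
    have g11 := ext_at (((f [1] ++ (f [2] ++ f [3])) ++ (f [1] ++ (f [3] ++ f [2])))
        ++ (f [3] ++ (f [1] ++ f [2])))
      (f [3]) (f [2] ++ f [1]) h12 (by simp [List.append_assoc])
      (3 * (3 * e)) 1 (by simp only [List.length_append]; omega) (by omega)
    have e0 : arshon (3 * (2 * e)) = arshon (3 * (3 * e)) := by
      rw [Nat.add_zero] at g00 g10
      exact g00.symm.trans g10
    have e1 : arshon (3 * (2 * e) + 1) = arshon (3 * (3 * e) + 1) :=
      g01.symm.trans g11
    rw [W0e (2 * e) (by omega), W0o (3 * e) (by omega)] at e0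
    rw [W1, W1] at e1
    rcases arshon_mem (2 * e) with hx | hx | hx <;>
      rcases arshon_mem (3 * e) with hy | hy | hy <;>
        rw [hx, hy] at e0 e1 <;> simp [cyc] at e0 e1
  -- b ≤ 1
  have hbb : (f [2]).length ≤ 1 := by
    by_contra hcon
    have g00 := ext_at ((f [1] ++ (f [2] ++ f [3])) ++ (f [1] ++ f [3])) (f [2]) []
      h6 (by simp [List.append_assoc])
      (3 * (2 * e - 1) + 1 - ((f [2]).length - 2)) ((f [2]).length - 2)
      (by simp only [List.length_append]; omega) (by omega)
    have g01 := ext_at ((f [1] ++ (f [2] ++ f [3])) ++ (f [1] ++ f [3])) (f [2]) []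
      h6 (by simp [List.append_assoc])
      (3 * (2 * e - 1) + 2 - ((f [2]).length - 1)) ((f [2]).length - 1)
      (by simp only [List.length_append]; omega) (by omega)
    have g10 := ext_at (((f [1] ++ (f [2] ++ f [3])) ++ (f [1] ++ (f [3] ++ f [2])))
        ++ (f [3] ++ f [1])) (f [2]) []
      h9 (by simp [List.append_assoc])
      (3 * (3 * e - 1) + 1 - ((f [2]).length - 2)) ((f [2]).length - 2)
      (by simp only [List.length_append]; omega) (by omega)
    have g11 := ext_at (((f [1] ++ (f [2] ++ f [3])) ++ (f [1] ++ (f [3] ++ f [2])))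
        ++ (f [3] ++ f [1])) (f [2]) []
      h9 (by simp [List.append_assoc])
      (3 * (3 * e - 1) + 2 - ((f [2]).length - 1)) ((f [2]).length - 1)
      (by simp only [List.length_append]; omega) (by omega)
    rw [show 3 * (2 * e - 1) + 1 - ((f [2]).length - 2) + ((f [2]).length - 2)
        = 3 * (2 * e - 1) + 1 from by omega] at g00
    rw [show 3 * (2 * e - 1) + 2 - ((f [2]).length - 1) + ((f [2]).length - 1)
        = 3 * (2 * e - 1) + 2 from by omega] at g01
    rw [show 3 * (3 * e - 1) + 1 - ((f [2]).length - 2) + ((f [2]).length - 2)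
        = 3 * (3 * e - 1) + 1 from by omega] at g10
    rw [show 3 * (3 * e - 1) + 2 - ((f [2]).length - 1) + ((f [2]).length - 1)
        = 3 * (3 * e - 1) + 2 from by omega] at g11
    have e0 : arshon (3 * (2 * e - 1) + 1) = arshon (3 * (3 * e - 1) + 1) :=
      g00.symm.trans g10
    have e1 : arshon (3 * (2 * e - 1) + 2) = arshon (3 * (3 * e - 1) + 2) :=
      g01.symm.trans g11
    rw [W1, W1] at e0
    rw [W2o (2 * e - 1) (by omega), W2e (3 * e - 1) (by omega)] at e1
    rcases arshon_mem (2 * e - 1) with hx | hx | hx <;>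
      rcases arshon_mem (3 * e - 1) with hy | hy | hy <;>
        rw [hx, hy] at e0 e1 <;> simp [cyc] at e0 e1
  omega
end

section
/- There is no morphism f on finite words over {1,2,3} with f(w) = w (w the Arshon sequence), |f(1)| + |f(2)| + |f(3)| > 3, and |f(1)| = 3. -/
open List Filter

section ArshonAux

/-- ψ with an arbitrary starting index, to enable induction. -/
private def psiF (s : ℕ) (l : List ℕ) : List ℕ :=
  ((l.zipIdx s).map fun p => if p.2 % 2 = 0 then oddBlock p.1 else evenBlock p.1).flatten

private lemma psiF_cons (s a : ℕ) (l : List ℕ) :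
    psiF s (a :: l) = (if s % 2 = 0 then oddBlock a else evenBlock a) ++ psiF (s+1) l := by
  simp [psiF, zipIdx_cons]

private lemma block_length {a : ℕ} (ha : a = 1 ∨ a = 2 ∨ a = 3) (s : ℕ) :
    (if s % 2 = 0 then oddBlock a else evenBlock a).length = 3 := by
  rcases ha with rfl | rfl | rfl <;> split <;> rfl

private lemma psiF_length (l : List ℕ) (hl : Word123 l) (s : ℕ) :
    (psiF s l).length = 3 * l.length := by
  induction l generalizing s with
  | nil => rfl
  | cons a t ih =>
    rw [psiF_cons]
    have ha := hl a (by simp)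
    simp only [length_append, block_length ha, ih (fun x hx => hl x (by simp [hx])) (s+1),
      length_cons]
    ring

private lemma psiF_getD (l : List ℕ) (hl : Word123 l) (s q r : ℕ)
    (hq : q < l.length) (hr : r < 3) :
    (psiF s l).getD (3*q+r) 0
      = (if (s+q) % 2 = 0 then oddBlock (l.getD q 0) else evenBlock (l.getD q 0)).getD r 0 := by
  induction l generalizing s q with
  | nil => simp at hq
  | cons a t ih =>
    rw [psiF_cons]
    rcases q with _ | q
    · rw [List.getD_append _ _ _ _ (by simp [block_length (hl a (by simp))]; omega)]
      simp
    · have hlen : (if s % 2 = 0 then oddBlock a else evenBlock a).length = 3 :=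
        block_length (hl a (by simp)) s
      rw [List.getD_append_right _ _ _ _ (by omega)]
      have h1 : 3 * (q+1) + r - (if s % 2 = 0 then oddBlock a else evenBlock a).length
          = 3*q + r := by omega
      rw [h1, ih (fun x hx => hl x (by simp [hx])) (s+1) q (by simpa using hq)]
      have h2 : s + 1 + q = s + (q+1) := by ring
      simp [h2]

private lemma psi_eq_psiF (l : List ℕ) : psi l = psiF 0 l := rfl

private lemma psi_word123 (l : List ℕ) (hl : Word123 l) : Word123 (psi l) := by
  intro x hx
  simp only [psi, mem_flatten, List.mem_map] at hx
  obtain ⟨bl, ⟨p, hp, rfl⟩, hxbl⟩ := hx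
  have hp2 := hl p.1 (List.fst_mem_of_mem_zipIdx hp)
  rcases hp2 with h | h | h <;> rw [h] at hxbl <;>
    split at hxbl <;> simp [oddBlock, evenBlock] at hxbl <;> omega

private lemma iter_word123 (k : ℕ) : Word123 (psi^[k] [1]) := by
  induction k with
  | zero => intro a ha; simp at ha; omega
  | succ k ih => rw [Function.iterate_succ_apply']; exact psi_word123 _ ih

private lemma psi_prefix {u v : List ℕ} (h : u <+: v) : psi u <+: psi v := by
  obtain ⟨t, rfl⟩ := h
  simp only [psi, zipIdx_append, map_append, flatten_append]
  exact ⟨_, rfl⟩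

private lemma iter_prefix_succ (k : ℕ) : psi^[k] [1] <+: psi^[k+1] [1] := by
  induction k with
  | zero => exact ⟨[2,3], rfl⟩
  | succ k ih =>
    rw [Function.iterate_succ_apply', Function.iterate_succ_apply' psi (k+1)]
    exact psi_prefix ih

private lemma iter_prefix {j k : ℕ} (h : j ≤ k) : psi^[j] [1] <+: psi^[k] [1] := by
  induction k with
  | zero => rw [Nat.le_zero.mp h]
  | succ k ih =>
    rcases Nat.lt_or_ge j (k+1) with h' | h'
    · exact (ih (by omega)).trans (iter_prefix_succ k)
    · have hjk : j = k+1 := by omega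
      rw [hjk]

private lemma iter_length (k : ℕ) : (psi^[k] [1]).length = 3 ^ k := by
  induction k with
  | zero => rfl
  | succ k ih =>
    rw [Function.iterate_succ_apply', psi_eq_psiF, psiF_length _ (iter_word123 k) 0, ih,
      pow_succ]
    ring

private lemma prefix_getD {u v : List ℕ} (h : u <+: v) {n : ℕ} (hn : n < u.length) :
    v.getD n 0 = u.getD n 0 := by
  obtain ⟨t, rfl⟩ := h
  rw [List.getD_append _ _ _ _ hn]

private lemma nlt (n : ℕ) : n < (psi^[n+1] [1]).length := by
  rw [iter_length]
  calc n < 3 ^ n := Nat.lt_pow_self (by norm_num)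
  _ ≤ 3 ^ (n+1) := Nat.pow_le_pow_right (by norm_num) (by omega)

private lemma arshon_eq_getD (k n : ℕ) (h : n < (psi^[k] [1]).length) :
    arshon n = (psi^[k] [1]).getD n 0 := by
  have e1 := prefix_getD (iter_prefix (le_max_left (n+1) k)) (nlt n)
  have e2 := prefix_getD (iter_prefix (le_max_right (n+1) k)) h
  rw [arshon, ← e1, e2]

private lemma arshon_mem (n : ℕ) : arshon n = 1 ∨ arshon n = 2 ∨ arshon n = 3 := by
  rw [arshon, List.getD_eq_getElem _ _ (nlt n)]
  exact iter_word123 (n+1) _ (List.getElem_mem (nlt n))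

private lemma arshon_rec (q r : ℕ) (hr : r < 3) :
    arshon (3*q+r)
      = (if q % 2 = 0 then oddBlock (arshon q) else evenBlock (arshon q)).getD r 0 := by
  have hq : q < (psi^[q+1] [1]).length := nlt q
  have hlt : 3*q+r < (psi^[q+2] [1]).length := by
    rw [iter_length, pow_succ]
    have h3 := hq; rw [iter_length] at h3
    omega
  rw [arshon_eq_getD (q+2) _ hlt, Function.iterate_succ_apply', psi_eq_psiF,
    psiF_getD _ (iter_word123 (q+1)) 0 q r hq hr, arshon_eq_getD (q+1) q hq]
  norm_num

set_option linter.unnecessarySeqFocus false in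
private lemma occ123 (p : ℕ) (h1 : arshon p = 1) (h2 : arshon (p+1) = 2)
    (h3 : arshon (p+2) = 3) : p % 6 = 0 ∨ p % 6 = 1 ∨ p % 6 = 5 := by
  obtain ⟨q, r, hr, rfl⟩ : ∃ q r, r < 3 ∧ p = 3*q + r :=
    ⟨p/3, p%3, Nat.mod_lt _ (by norm_num), by omega⟩
  have hx := arshon_mem q
  have hy := arshon_mem (q+1)
  have hq2 := Nat.mod_two_eq_zero_or_one q
  have hq2' : (q+1) % 2 = 1 - q % 2 := by omega
  interval_cases r
  · rw [arshon_rec q 0 (by norm_num)] at h1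
    rw [show 3*q+0+1 = 3*q+1 by ring, arshon_rec q 1 (by norm_num)] at h2
    rcases hq2 with hq2 | hq2 <;>
      rcases hx with hx | hx | hx <;>
        simp [hq2, hx, oddBlock, evenBlock] at h1 h2 <;> omega
  · rw [arshon_rec q 1 (by norm_num)] at h1
    rw [show 3*q+1+1 = 3*q+2 by ring, arshon_rec q 2 (by norm_num)] at h2
    rcases hq2 with hq2 | hq2 <;>
      rcases hx with hx | hx | hx <;>
        simp [hq2, hx, oddBlock, evenBlock] at h1 h2 <;> omega
  · rw [arshon_rec q 2 (by norm_num)] at h1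
    rw [show 3*q+2+1 = 3*(q+1)+0 by ring, arshon_rec (q+1) 0 (by norm_num)] at h2
    rw [show 3*q+2+2 = 3*(q+1)+1 by ring, arshon_rec (q+1) 1 (by norm_num)] at h3
    rcases hq2 with hq2 | hq2 <;>
      rcases hx with hx | hx | hx <;>
        rcases hy with hy | hy | hy <;>
          simp [hq2, hq2', hx, hy, oddBlock, evenBlock] at h1 h2 h3 <;> omega

private lemma psi3 :
    psi^[3] [1] = [1,2,3,1,3,2,3,1,2,3,2,1,3,1,2,1,3,2,3,1,2,3,2,1,2,3,1] := by decide

end ArshonAux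

set_option maxHeartbeats 4000000 in
/-- There is no morphism `f` with `f(w) = w`, `|f(1)|+|f(2)|+|f(3)| > 3`
and `|f(1)| = 3`. -/
theorem arshon_no_fixing_morphism_length_eq_3 :
    ¬ ∃ f : List ℕ → List ℕ, IsMorphism123 f ∧ FixesArshon f ∧
      (f [1]).length + (f [2]).length + (f [3]).length > 3 ∧
      (f [1]).length = 3 := by
  rintro ⟨f, ⟨hadd, -⟩, ⟨hfix, -⟩, -, hf1len⟩
  have hv : ∀ n, n < 27 → arshon n
      = [1,2,3,1,3,2,3,1,2,3,2,1,3,1,2,1,3,2,3,1,2,3,2,1,2,3,1].getD n 0 := by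
    intro n hn
    rw [arshon_eq_getD 3 n (by rw [psi3]; simpa using hn), psi3]
  have hnil : f [] = [] := by
    have h := hadd [] []
    simp only [List.append_nil] at h
    have h2 := congrArg List.length h
    rw [List.length_append] at h2
    exact List.eq_nil_of_length_eq_zero (by omega)
  have hstep : ∀ n, f ((List.range (n+1)).map arshon)
      = f ((List.range n).map arshon) ++ f [arshon n] := by
    intro n
    rw [List.range_succ, List.map_append, hadd]
    simp
  obtain ⟨L, hLdef⟩ : ∃ L : ℕ → ℕ, L = fun n => (f ((List.range n).map arshon)).length :=
    ⟨_, rfl⟩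
  have hL0 : L 0 = 0 := by simp [hLdef, hnil]
  have hLsucc : ∀ n, L (n+1) = L n + (f [arshon n]).length := by
    intro n
    simp [hLdef, hstep n]
  have hmapr : ∀ M j, j < M → ((List.range M).map arshon).getD j 0 = arshon j := by
    intro M j hj
    rw [List.getD_eq_getElem _ _ (by simpa using hj)]
    simp
  have hK : ∀ n i, i < (f [arshon n]).length → arshon (L n + i) = (f [arshon n]).getD i 0 := by
    intro n i hi
    have h1 := hfix (n+1)
    rw [hstep n] at h1
    have hlen : (f ((List.range n).map arshon)).length = L n := by rw [hLdef]
    have h2 := congrArg (fun l => l.getD (L n + i) 0) h1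
    rw [List.getD_append_right _ _ _ _ (by rw [hlen]; omega), hlen,
      Nat.add_sub_cancel_left] at h2
    rw [h2, hmapr]
    rw [List.length_append, hlen]
    omega
  have hv0 : arshon 0 = 1 := by simpa using hv 0 (by norm_num)
  have hK0 := hK 0
  rw [hv0] at hK0
  have hf1get : ∀ i, i < 3 → (f [1]).getD i 0 = arshon i := by
    intro i hi
    rw [← hK0 i (by omega), hL0, Nat.zero_add]
  have htriple : ∀ n, arshon n = 1 →
      arshon (L n) = 1 ∧ arshon (L n + 1) = 2 ∧ arshon (L n + 2) = 3 := by
    intro n hn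
    have hA := hK n
    rw [hn] at hA
    have e0 := hA 0 (by omega)
    have e1 := hA 1 (by omega)
    have e2 := hA 2 (by omega)
    rw [Nat.add_zero] at e0
    rw [e0, e1, e2, hf1get 0 (by norm_num), hf1get 1 (by norm_num), hf1get 2 (by norm_num)]
    refine ⟨by simpa using hv 0 (by norm_num), by simpa using hv 1 (by norm_num),
      by simpa using hv 2 (by norm_num)⟩
  have hmod : ∀ n, arshon n = 1 → L n % 6 = 0 ∨ L n % 6 = 1 ∨ L n % 6 = 5 := by
    intro n hn
    obtain ⟨a1, a2, a3⟩ := htriple n hn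
    exact occ123 _ a1 a2 a3
  have hv0 : arshon 0 = 1 := by simpa using hv 0 (by norm_num)
  have hv1 : arshon 1 = 2 := by simpa using hv 1 (by norm_num)
  have hv2 : arshon 2 = 3 := by simpa using hv 2 (by norm_num)
  have hv3 : arshon 3 = 1 := by simpa using hv 3 (by norm_num)
  have hv4 : arshon 4 = 3 := by simpa using hv 4 (by norm_num)
  have hv5 : arshon 5 = 2 := by simpa using hv 5 (by norm_num)
  have hv6 : arshon 6 = 3 := by simpa using hv 6 (by norm_num)
  have hv7 : arshon 7 = 1 := by simpa using hv 7 (by norm_num)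
  have hv8 : arshon 8 = 2 := by simpa using hv 8 (by norm_num)
  have hv9 : arshon 9 = 3 := by simpa using hv 9 (by norm_num)
  have hv10 : arshon 10 = 2 := by simpa using hv 10 (by norm_num)
  have hv11 : arshon 11 = 1 := by simpa using hv 11 (by norm_num)
  have hv12 : arshon 12 = 3 := by simpa using hv 12 (by norm_num)
  have hv13 : arshon 13 = 1 := by simpa using hv 13 (by norm_num)
  have hv14 : arshon 14 = 2 := by simpa using hv 14 (by norm_num)
  have hv15 : arshon 15 = 1 := by simpa using hv 15 (by norm_num)
  have hv16 : arshon 16 = 3 := by simpa using hv 16 (by norm_num)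
  have hv17 : arshon 17 = 2 := by simpa using hv 17 (by norm_num)
  have hv18 : arshon 18 = 3 := by simpa using hv 18 (by norm_num)
  have hv19 : arshon 19 = 1 := by simpa using hv 19 (by norm_num)
  have hv20 : arshon 20 = 2 := by simpa using hv 20 (by norm_num)
  have hv21 : arshon 21 = 3 := by simpa using hv 21 (by norm_num)
  have hv22 : arshon 22 = 2 := by simpa using hv 22 (by norm_num)
  have hv23 : arshon 23 = 1 := by simpa using hv 23 (by norm_num)
  have hs0 : L 1 = L 0 + (f [1]).length := by
    have h := hLsucc 0
    rw [hv0] at h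
    exact h
  have hs1 : L 2 = L 1 + (f [2]).length := by
    have h := hLsucc 1
    rw [hv1] at h
    exact h
  have hs2 : L 3 = L 2 + (f [3]).length := by
    have h := hLsucc 2
    rw [hv2] at h
    exact h
  have hs3 : L 4 = L 3 + (f [1]).length := by
    have h := hLsucc 3
    rw [hv3] at h
    exact h
  have hs4 : L 5 = L 4 + (f [3]).length := by
    have h := hLsucc 4
    rw [hv4] at h
    exact h
  have hs5 : L 6 = L 5 + (f [2]).length := by
    have h := hLsucc 5
    rw [hv5] at h
    exact h
  have hs6 : L 7 = L 6 + (f [3]).length := by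
    have h := hLsucc 6
    rw [hv6] at h
    exact h
  have hs7 : L 8 = L 7 + (f [1]).length := by
    have h := hLsucc 7
    rw [hv7] at h
    exact h
  have hs8 : L 9 = L 8 + (f [2]).length := by
    have h := hLsucc 8
    rw [hv8] at h
    exact h
  have hs9 : L 10 = L 9 + (f [3]).length := by
    have h := hLsucc 9
    rw [hv9] at h
    exact h
  have hs10 : L 11 = L 10 + (f [2]).length := by
    have h := hLsucc 10
    rw [hv10] at h
    exact h
  have hs11 : L 12 = L 11 + (f [1]).length := by
    have h := hLsucc 11
    rw [hv11] at h
    exact h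
  have hs12 : L 13 = L 12 + (f [3]).length := by
    have h := hLsucc 12
    rw [hv12] at h
    exact h
  have hs13 : L 14 = L 13 + (f [1]).length := by
    have h := hLsucc 13
    rw [hv13] at h
    exact h
  have hs14 : L 15 = L 14 + (f [2]).length := by
    have h := hLsucc 14
    rw [hv14] at h
    exact h
  have hs15 : L 16 = L 15 + (f [1]).length := by
    have h := hLsucc 15
    rw [hv15] at h
    exact h
  have hs16 : L 17 = L 16 + (f [3]).length := by
    have h := hLsucc 16
    rw [hv16] at h
    exact h
  have hs17 : L 18 = L 17 + (f [2]).length := by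
    have h := hLsucc 17
    rw [hv17] at h
    exact h
  have hs18 : L 19 = L 18 + (f [3]).length := by
    have h := hLsucc 18
    rw [hv18] at h
    exact h
  have hs19 : L 20 = L 19 + (f [1]).length := by
    have h := hLsucc 19
    rw [hv19] at h
    exact h
  have hs20 : L 21 = L 20 + (f [2]).length := by
    have h := hLsucc 20
    rw [hv20] at h
    exact h
  have hs21 : L 22 = L 21 + (f [3]).length := by
    have h := hLsucc 21
    rw [hv21] at h
    exact h
  have hs22 : L 23 = L 22 + (f [2]).length := by
    have h := hLsucc 22
    rw [hv22] at h
    exact h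
  have hm7 := hmod 7 hv7
  have hm11 := hmod 11 hv11
  have hm13 := hmod 13 hv13
  have hm19 := hmod 19 hv19
  clear hv hv0 hv1 hv2 hv3 hv4 hv5 hv6 hv7 hv8 hv9 hv10 hv11 hv12 hv13 hv14 hv15 hv16 hv17 hv18 hv19 hv20 hv21 hv22 hv23 hK hK0 hmod htriple hf1get hmapr hfix hstep hLsucc hnil hLdef
  have E7 : L 7 = 6 + 2 * (f [2]).length + 3 * (f [3]).length := by omega
  have E11 : L 11 = 9 + 4 * (f [2]).length + 4 * (f [3]).length := by omega
  have E13 : L 13 = 12 + 4 * (f [2]).length + 5 * (f [3]).length := by omega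
  have E19 : L 19 = 18 + 6 * (f [2]).length + 7 * (f [3]).length := by omega
  rw [E7] at hm7
  rw [E11] at hm11
  rw [E13] at hm13
  rw [E19] at hm19
  clear E7 E11 E13 E19 hL0 hf1len hs0 hs1 hs2 hs3 hs4 hs5 hs6 hs7 hs8 hs9 hs10 hs11 hs12 hs13 hs14 hs15 hs16 hs17 hs18 hs19 hs20 hs21 hs22
  omega
end

section
/- There is no morphism f on finite words over {1,3} such that f(1) begins with the letter 1, the lengths |f^k(1)| tend to infinity, and the σ-sequence w_σ equals lim_{k→∞} f^k(1); that is, w_σ cannot be obtained by iteration of a morphism. -/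
open List Filter

/-- `σ(n)`: writing `n = 2^t * (4s + σ)` with `σ ∈ {1,3}` and `2^t` the largest
power of 2 dividing `n`, return `σ` (junk value 0 at `n = 0`). -/
def sigma (n : ℕ) : ℕ := (ordCompl[2] n) % 4

/-- The σ-sequence as an infinite word: its `n`-th letter (0-based) is `σ(n+1)`. -/
def sigmaSeq (n : ℕ) : ℕ := sigma (n + 1)

/-- A word over the alphabet {1,3}. -/
def Word13 (l : List ℕ) : Prop := ∀ a ∈ l, a = 1 ∨ a = 3

/-- A morphism on finite words over {1,3}. -/
def IsMorphism13 (f : List ℕ → List ℕ) : Prop :=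
  (∀ u v, f (u ++ v) = f u ++ f v) ∧ ∀ l, Word13 l → Word13 (f l)

lemma sigma_odd (m : ℕ) : sigma (2*m+1) = (2*m+1) % 4 := by
  unfold sigma
  rw [Nat.factorization_eq_zero_of_not_dvd (by omega)]
  simp

lemma sigma_two_mul (k : ℕ) : sigma (2*k) = sigma k := by
  unfold sigma
  rw [Nat.ordCompl_mul]
  have h2 : (2:ℕ).factorization 2 = 1 := Nat.Prime.factorization_self Nat.prime_two
  simp [h2]

lemma sigmaSeq_even (m : ℕ) : sigmaSeq (2*m) = if m % 2 = 0 then 1 else 3 := by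
  unfold sigmaSeq
  rw [show 2*m+1 = 2*m+1 from rfl, sigma_odd]
  split <;> omega

lemma sigmaSeq_odd (m : ℕ) : sigmaSeq (2*m+1) = sigmaSeq m := by
  unfold sigmaSeq
  rw [show 2*m+1+1 = 2*(m+1) from by ring, sigma_two_mul]

lemma sigmaSeq_even_ne (a b : ℕ) (h : a % 2 ≠ b % 2) : sigmaSeq (2*a) ≠ sigmaSeq (2*b) := by
  rw [sigmaSeq_even, sigmaSeq_even]
  split <;> split <;> omega

lemma noCube : ∀ L, 2 ≤ L → ∀ i, ¬ (∀ j, j < 2*L → sigmaSeq (i+j) = sigmaSeq (i+j+L)) := by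
  intro L
  induction L using Nat.strong_induction_on with
  | _ L IH =>
    intro hL i H
    rcases Nat.even_or_odd L with ⟨M, hM⟩ | ⟨c, hc⟩
    · -- L = M + M
      rcases Nat.even_or_odd M with ⟨d, hd⟩ | ⟨d, hd⟩
      · -- M even, M = 2d with d ≥ 1 ; reduce to period M
        have hM2 : 2 ≤ M := by omega
        rcases Nat.even_or_odd i with ⟨x, hx⟩ | ⟨x, hx⟩
        · refine IH M (by omega) hM2 x ?_
          intro r hr
          have h := H (2*r+1) (by omega)
          rw [show i+(2*r+1)+L = 2*(x+r+M)+1 from by omega, sigmaSeq_odd,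
              show i+(2*r+1) = 2*(x+r)+1 from by omega, sigmaSeq_odd] at h
          exact h
        · refine IH M (by omega) hM2 x ?_
          intro r hr
          have h := H (2*r) (by omega)
          rw [show i+(2*r)+L = 2*(x+r+M)+1 from by omega, sigmaSeq_odd,
              show i+(2*r) = 2*(x+r)+1 from by omega, sigmaSeq_odd] at h
          exact h
      · -- M odd : even positions contradict directly
        rcases Nat.even_or_odd i with ⟨x, hx⟩ | ⟨x, hx⟩
        · have h := H 0 (by omega)
          rw [show i+0+L = 2*(x+M) from by omega, show i+0 = 2*x from by omega] at h
          exact sigmaSeq_even_ne x (x+M) (by omega) h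
        · have h := H 1 (by omega)
          rw [show i+1+L = 2*(x+1+M) from by omega, show i+1 = 2*(x+1) from by omega] at h
          exact sigmaSeq_even_ne (x+1) (x+1+M) (by omega) h
    · -- L = 2c+1 odd, c ≥ 1
      have hc1 : 1 ≤ c := by omega
      rcases Nat.even_or_odd i with ⟨x, hx⟩ | ⟨x, hx⟩
      · have hE := H 0 (by omega)
        rw [show i+0+L = 2*(x+c)+1 from by omega, sigmaSeq_odd,
            show i+0 = 2*x from by omega] at hE
        have hO := H (2*c+1) (by omega)
        rw [show i+(2*c+1)+L = 2*(x+2*c+1) from by omega,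
            show i+(2*c+1) = 2*(x+c)+1 from by omega, sigmaSeq_odd] at hO
        exact sigmaSeq_even_ne x (x+2*c+1) (by omega) (hE.trans hO)
      · have hE := H 1 (by omega)
        rw [show i+1+L = 2*(x+c+1)+1 from by omega, sigmaSeq_odd,
            show i+1 = 2*(x+1) from by omega] at hE
        have hO := H (2*c+2) (by omega)
        rw [show i+(2*c+2)+L = 2*(x+2*c+2) from by omega,
            show i+(2*c+2) = 2*(x+c+1)+1 from by omega, sigmaSeq_odd] at hO
        exact sigmaSeq_even_ne (x+1) (x+2*c+2) (by omega) (hE.trans hO)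

lemma iter_append (f : List ℕ → List ℕ) (hf : ∀ u v, f (u ++ v) = f u ++ f v) :
    ∀ k u v, f^[k] (u ++ v) = f^[k] u ++ f^[k] v := by
  intro k
  induction k with
  | zero => intro u v; simp
  | succ k ih =>
    intro u v
    rw [Function.iterate_succ_apply', ih, hf, Function.iterate_succ_apply',
        Function.iterate_succ_apply']

lemma cube_getD (a : List ℕ) (j : ℕ) (hj : j < 2 * a.length) :
    (a ++ a ++ a).getD j 0 = (a ++ a ++ a).getD (j + a.length) 0 := by
  have h1 : (a ++ a ++ a) = a ++ (a ++ a) := by simp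
  rw [h1]
  rw [List.getD_append_right a (a ++ a) 0 (j + a.length) (by omega)]
  have h2 : j + a.length - a.length = j := by omega
  rw [h2]
  rcases lt_or_ge j a.length with h | h
  · rw [List.getD_append a (a ++ a) 0 j h, List.getD_append a a 0 j h]
  · rw [List.getD_append_right a (a ++ a) 0 j h, List.getD_append_right a a 0 j h,
        List.getD_append a a 0 (j - a.length) (by omega)]


lemma w7 : sigmaSeq 7 = 1 ∧ sigmaSeq 8 = 1 ∧ sigmaSeq 9 = 1 := by
  have h0 := sigmaSeq_even 0
  have h2 := sigmaSeq_even 2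
  have h4 := sigmaSeq_even 4
  have a1 := sigmaSeq_odd 0
  have a3 := sigmaSeq_odd 1
  have a7 := sigmaSeq_odd 3
  have a9 := sigmaSeq_odd 4
  norm_num at h0 h2 h4 a1 a3 a7 a9
  refine ⟨by omega, by omega, by omega⟩


/-- The σ-sequence cannot be obtained by iteration of a morphism. -/
theorem sigmaSeq_not_obtained_by_iteration :
    ¬ ∃ f : List ℕ → List ℕ, IsMorphism13 f ∧ IterLimit f sigmaSeq := by
  rintro ⟨f, ⟨happ, -⟩, -, hlen, hagree⟩
  obtain ⟨k0, hk0⟩ := (hlen.eventually_ge_atTop 2).exists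
  obtain ⟨K, hK⟩ := (hlen.eventually_ge_atTop 10).exists

  obtain ⟨A, hA⟩ : ∃ A, A = f^[K] [1] := ⟨_, rfl⟩
  rw [← hA] at hK
  have hget : ∀ t, t < 10 → A.getD t 0 = sigmaSeq t := by
    intro t ht
    rw [hA]; exact hagree K t (by rw [← hA]; omega)
  rcases A with - | ⟨x0, A⟩; · simp at hK
  rcases A with - | ⟨x1, A⟩; · simp at hK
  rcases A with - | ⟨x2, A⟩; · simp at hK
  rcases A with - | ⟨x3, A⟩; · simp at hK
  rcases A with - | ⟨x4, A⟩; · simp at hK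
  rcases A with - | ⟨x5, A⟩; · simp at hK
  rcases A with - | ⟨x6, A⟩; · simp at hK
  rcases A with - | ⟨x7, A⟩; · simp at hK
  rcases A with - | ⟨x8, A⟩; · simp at hK
  rcases A with - | ⟨x9, v⟩; · simp at hK
  have h7 : x7 = 1 := by have := hget 7 (by omega); simpa [List.getD, w7.1] using this
  have h8 : x8 = 1 := by have := hget 8 (by omega); simpa [List.getD, w7.2.1] using this
  have h9 : x9 = 1 := by have := hget 9 (by omega); simpa [List.getD, w7.2.2] using this
  subst h7 h8 h9
  have hsplit : f^[K] [1] = [x0,x1,x2,x3,x4,x5,x6] ++ ([1] ++ ([1] ++ [1])) ++ v := by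
    rw [← hA]; rfl
  set a : List ℕ := f^[k0] [1] with ha
  set la := a.length with hla
  set P : List ℕ := f^[k0] [x0,x1,x2,x3,x4,x5,x6] with hP
  set S : List ℕ := f^[k0] v with hS
  set i := P.length with hi
  have hB : f^[k0+K] [1] = P ++ ((a ++ a ++ a) ++ S) := by
    rw [Function.iterate_add_apply, hsplit, iter_append f happ, iter_append f happ,
        iter_append f happ, iter_append f happ]
    simp [List.append_assoc]; rfl
  have hcl : (a ++ a ++ a).length = la + la + la := by simp; omega
  have key : ∀ m, m < 3*la → sigmaSeq (i+m) = (a ++ a ++ a).getD m 0 := by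
    intro m hm
    have h1 := hagree (k0+K) (i+m) (by rw [hB]; simp [List.length_append]; omega)
    rw [hB, List.getD_append_right P _ 0 (i+m) (by omega),
        show i + m - P.length = m from by omega,
        List.getD_append _ S 0 m (by omega)] at h1
    exact h1.symm
  refine noCube la hk0 i (fun j hj => ?_)
  rw [show i + j + la = i + (j + la) from by omega,
      key j (by omega), key (j+la) (by omega)]
  exact cube_getD a j hj
end
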